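/- Let Γ be an abelian group, K a field, ε a commutation factor on Γ over K, D a natural number, φ : Fin D → Γ, and d ∈ Γ. Let X : M_D(K) → M_D(K) be a K-linear map such that: (homogeneity) for all i, j, the matrix X(E_{ij}) is homogeneous of degree φ(i) − φ(j) + d for the elementary grading determined by φ; and (ε-Leibniz rule on basis matrices) for all i, j, k, l: X(E_{ij}·E_{kl}) = X(E_{ij})·E_{kl} + ε(d, φ(i) − φ(j))·E_{ij}·X(E_{kl}). Then X is an inner ε-derivation: there exists a matrix M ∈ M_D(K), homogeneous of degree d, such that X(E_{ij}) = M·E_{ij} − ε(d, φ(i) − φ(j))·E_{ij}·M for all i, j. -/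

import Mathlib

/-- A commutation factor on an abelian group `Γ` over a field `K`. -/
def IsCommFactor {Γ K : Type*} [AddCommGroup Γ] [Field K] (ε : Γ → Γ → Kˣ) : Prop :=
  (∀ i j, ε i j * ε j i = 1) ∧
  (∀ i j k, ε i (j + k) = ε i j * ε i k) ∧
  (∀ i j k, ε (i + j) k = ε i k * ε j k)

private lemma sum_std_one {D : ℕ} {K : Type*} [Field K] (z : Fin D) :
    ∑ k : Fin D, (Matrix.single k z 1 * Matrix.single z k 1
      : Matrix (Fin D) (Fin D) K) = 1 := by
  have h : ∀ k : Fin D, (Matrix.single k z 1 * Matrix.single z k 1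
      : Matrix (Fin D) (Fin D) K) = Matrix.single k k 1 := by
    intro k; rw [Matrix.single_mul_single_same, one_mul]
  rw [Finset.sum_congr rfl (fun k _ => h k)]
  ext a b
  rw [Matrix.sum_apply]
  by_cases hab : a = b
  · subst hab
    rw [Matrix.one_apply_eq, Finset.sum_eq_single a]
    · rw [Matrix.single_apply_same]
    · intro m _ hm
      exact Matrix.single_apply_of_ne (c := (1 : K)) (h := fun (h' : m = a ∧ m = a) => hm h'.1)
    · intro h'; exact absurd (Finset.mem_univ a) h'
  · rw [Matrix.one_apply_ne hab]
    refine Finset.sum_eq_zero fun m _ => ?_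
    exact Matrix.single_apply_of_ne (c := (1 : K)) (h := fun (h' : m = a ∧ m = b) => hab (h'.1.symm.trans h'.2))

theorem statement11 {Γ K : Type*} [AddCommGroup Γ] [Field K]
    (ε : Γ → Γ → Kˣ) (hε : IsCommFactor ε)
    (D : ℕ) (φ : Fin D → Γ) (d : Γ)
    (X : Matrix (Fin D) (Fin D) K →ₗ[K] Matrix (Fin D) (Fin D) K)
    (hhom : ∀ i j k l : Fin D, φ k - φ l ≠ φ i - φ j + d →
      X (Matrix.single i j 1) k l = 0)
    (hleib : ∀ i j k l : Fin D,
      X (Matrix.single i j 1 * Matrix.single k l 1) =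
      X (Matrix.single i j 1) * Matrix.single k l 1 +
      (ε d (φ i - φ j) : K) •
        (Matrix.single i j 1 * X (Matrix.single k l 1))) :
    ∃ M : Matrix (Fin D) (Fin D) K,
      (∀ k l : Fin D, φ k - φ l ≠ d → M k l = 0) ∧
      (∀ i j : Fin D, X (Matrix.single i j 1) =
        M * Matrix.single i j 1 -
        (ε d (φ i - φ j) : K) • (Matrix.single i j 1 * M)) := by
  rcases Nat.eq_zero_or_pos D with hD | hD
  · subst hD
    exact ⟨0, fun k l _ => k.elim0, fun i j => i.elim0⟩
  set z : Fin D := ⟨0, hD⟩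
  set M : Matrix (Fin D) (Fin D) K :=
    ∑ k : Fin D, X (Matrix.single k z 1) * Matrix.single z k 1 with hM
  refine ⟨M, ?_, ?_⟩
  · intro k l hkl
    have hMkl : M k l = X (Matrix.single l z 1) k z := by
      rw [hM, Matrix.sum_apply]
      rw [Finset.sum_eq_single l]
      · simp
      · intro m _ hm
        simp [Ne.symm hm]
      · intro h; exact absurd (Finset.mem_univ l) h
    rw [hMkl]
    apply hhom
    intro h
    apply hkl
    have : φ k - φ l = d := by
      have := h
      abel_nf at this ⊢
      linear_combination (norm := abel_nf) this
    exact this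
  · intro i j
    -- compute M * E i j
    have h1 : M * Matrix.single i j 1 =
        X (Matrix.single i z 1) * Matrix.single z j 1 := by
      rw [hM, Finset.sum_mul]
      rw [Finset.sum_eq_single i]
      · rw [mul_assoc, Matrix.single_mul_single_same, one_mul]
      · intro m _ hm
        rw [mul_assoc, Matrix.single_mul_single_of_ne (h := hm), mul_zero]
      · intro h; exact absurd (Finset.mem_univ i) h
    -- compute ε • (E i j * M)
    have h2 : (ε d (φ i - φ j) : K) • (Matrix.single i j 1 * M) =
        X (Matrix.single i z 1) * Matrix.single z j 1 -
        X (Matrix.single i j 1) := by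
      rw [hM, Finset.mul_sum, Finset.smul_sum]
      have hterm : ∀ k : Fin D,
          (ε d (φ i - φ j) : K) • (Matrix.single i j 1 *
            (X (Matrix.single k z 1) * Matrix.single z k 1)) =
          (X (Matrix.single i j 1 * Matrix.single k z 1) -
            X (Matrix.single i j 1) * Matrix.single k z 1) *
            Matrix.single z k 1 := by
        intro k
        have := hleib i j k z
        rw [this, add_sub_cancel_left, smul_mul_assoc, mul_assoc]
      rw [Finset.sum_congr rfl (fun k _ => hterm k)]
      have hsplit : ∀ k : Fin D,
          (X (Matrix.single i j 1 * Matrix.single k z 1) -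
            X (Matrix.single i j 1) * Matrix.single k z 1) *
            Matrix.single z k 1 =
          X (Matrix.single i j 1 * Matrix.single k z 1) *
            Matrix.single z k 1 -
          X (Matrix.single i j 1) *
            (Matrix.single k z 1 * Matrix.single z k 1) := by
        intro k; rw [sub_mul, mul_assoc]
      rw [Finset.sum_congr rfl (fun k _ => hsplit k), Finset.sum_sub_distrib,
        ← Finset.mul_sum, sum_std_one, mul_one]
      congr 1
      rw [Finset.sum_eq_single j]
      · rw [Matrix.single_mul_single_same, one_mul]
      · intro m _ hm
        rw [Matrix.single_mul_single_of_ne (h := Ne.symm hm), map_zero, zero_mul]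
      · intro h; exact absurd (Finset.mem_univ j) h
    rw [h1, h2]
    abel
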